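/- For nonnegative integers k, l and x, y, z with x + y + z = 1, (-1)^k * sum_{j=0}^{k} binomial(k+1,j) * x^{k-j+1} * (l+j+1) * B_{l+j}(y) + (-1)^l * sum_{j=0}^{l} binomial(l+1,j) * x^{l-j+1} * (k+j+1) * B_{k+j}(z) = (-1)^k * (k+l+2) * (B_{k+l+1}(x+y) - B_{k+l+1}(y)). -/

import Mathlib

open Finset

namespace SunAux

open Polynomial

lemma key_binom (m : ℕ) : ∀ (n r : ℕ),
    ∑ j ∈ range (m + 1), (-1 : ℚ) ^ j * (m.choose j) * ((n + j).choose r)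
      = (-1 : ℚ) ^ m * (if m ≤ r then ((n.choose (r - m) : ℕ) : ℚ) else 0) := by
  induction m with
  | zero => intro n r; simp
  | succ m ih =>
    intro n r
    have step : ∑ j ∈ range (m + 2), (-1 : ℚ) ^ j * ((m+1).choose j) * ((n + j).choose r)
        = (∑ j ∈ range (m + 1), (-1 : ℚ) ^ j * (m.choose j) * ((n + j).choose r))
          - ∑ j ∈ range (m + 1), (-1 : ℚ) ^ j * (m.choose j) * (((n+1) + j).choose r) := by
      rw [Finset.sum_range_succ' (fun j => (-1 : ℚ) ^ j * ((m+1).choose j) * ((n + j).choose r))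
        (m+1)]
      rw [Finset.sum_range_succ' (fun j => (-1 : ℚ) ^ j * (m.choose j) * ((n + j).choose r)) m]
      have reidx : ∀ j, (-1 : ℚ) ^ (j+1) * ((m+1).choose (j+1)) * ((n + (j+1)).choose r)
          = -((-1 : ℚ) ^ j * (m.choose j) * (((n+1) + j).choose r))
            - ((-1 : ℚ) ^ j * (m.choose (j+1)) * (((n+1) + j).choose r)) := by
        intro j
        have : n + (j + 1) = (n + 1) + j := by ring
        rw [this, Nat.choose_succ_succ]
        push_cast
        ring
      simp only [reidx]
      have hz : ∑ j ∈ range (m + 1), ((-1 : ℚ) ^ j * (m.choose (j+1)) * (((n+1) + j).choose r))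
          = ∑ j ∈ range m, ((-1 : ℚ) ^ j * (m.choose (j+1)) * (((n+1) + j).choose r)) := by
        rw [Finset.sum_range_succ, Nat.choose_succ_self]; simp
      have hz2 : ∑ j ∈ range m, ((-1 : ℚ) ^ (j+1) * (m.choose (j+1)) * ((n + (j+1)).choose r))
          = - ∑ j ∈ range m, ((-1 : ℚ) ^ j * (m.choose (j+1)) * (((n+1) + j).choose r)) := by
        rw [← Finset.sum_neg_distrib]
        refine Finset.sum_congr rfl fun j _ => ?_
        have : n + (j + 1) = (n + 1) + j := by ring
        rw [this]; ring
      rw [Finset.sum_sub_distrib, Finset.sum_neg_distrib, hz, hz2]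
      simp
      ring
    rw [step, ih n r, ih (n+1) r]
    rcases lt_trichotomy r m with hc | hc | hc
    · rw [if_neg (by omega), if_neg (by omega), if_neg (by omega)]
      ring
    · subst hc
      rw [if_pos (le_refl r), if_pos (le_refl r), if_neg (by omega), Nat.sub_self,
        Nat.choose_zero_right, Nat.choose_zero_right]
      ring
    · rw [if_pos (by omega : m ≤ r), if_pos (by omega : m ≤ r), if_pos (by omega : m + 1 ≤ r)]
      have hs : r - m = (r - (m+1)) + 1 := by omega
      rw [hs, Nat.choose_succ_succ]
      push_cast
      ring

lemma poly_ext_of_deriv (p q : ℚ[X]) (h1 : derivative p = derivative q)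
    (h0 : p.eval 0 = q.eval 0) : p = q := by
  have hd : derivative (p - q) = 0 := by rw [derivative_sub, h1, sub_self]
  obtain ⟨c, hc⟩ := Polynomial.natDegree_eq_zero.mp
    (Polynomial.natDegree_eq_zero_of_derivative_eq_zero hd)
  have h2 : (p - q).eval 0 = 0 := by simp [h0]
  rw [← hc] at h2
  simp at h2
  have h3 : p - q = 0 := by rw [← hc, h2, map_zero]
  exact sub_eq_zero.mp h3

lemma bern_comp_add (y : ℚ) : ∀ n : ℕ, (Polynomial.bernoulli n).comp (X + C y)
    = ∑ i ∈ range (n + 1), C ((n.choose i : ℚ) * (Polynomial.bernoulli i).eval y) * X ^ (n - i) := by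
  intro n
  induction n with
  | zero => simp [Polynomial.bernoulli_zero]
  | succ n ih =>
    apply poly_ext_of_deriv
    · have lhs_eq : derivative ((Polynomial.bernoulli (n+1)).comp (X + C y))
          = ∑ i ∈ range (n + 1),
              C (((n:ℚ) + 1) * (n.choose i : ℚ) * (Polynomial.bernoulli i).eval y) * X ^ (n - i) := by
        rw [derivative_comp, Polynomial.derivative_bernoulli_add_one]
        rw [derivative_add, derivative_X, derivative_C, add_zero, one_mul]
        rw [mul_comp, add_comp, natCast_comp, one_comp, ih]
        rw [Finset.mul_sum]
        refine Finset.sum_congr rfl fun i hi => ?_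
        rw [show ((n : ℚ[X]) + 1) = C ((n : ℚ) + 1) by simp]
        rw [← mul_assoc, ← C_mul, mul_assoc]
      rw [lhs_eq, derivative_sum]
      conv_rhs => rw [Finset.sum_range_succ]
      simp only [derivative_mul, derivative_C, zero_mul, zero_add, derivative_X_pow]
      rw [Nat.sub_self, pow_zero, Nat.cast_zero, map_zero, zero_mul, mul_zero, add_zero]
      refine Finset.sum_congr rfl fun i hi => ?_
      have hi' : i ≤ n := by simpa [Nat.lt_succ_iff] using hi
      have hkey : ((n + 1).choose i : ℚ) * ((n + 1 - i : ℕ) : ℚ)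
          = ((n : ℚ) + 1) * (n.choose i : ℚ) := by
        have h2 : (n.choose i * (n + 1) : ℕ) = ((n+1).choose i * (n + 1 - i) : ℕ) :=
          Nat.choose_mul_succ_eq n i
        have := congrArg (fun t : ℕ => (t : ℚ)) h2
        push_cast at this
        linarith [this]
      have hexp : n + 1 - i - 1 = n - i := by omega
      rw [hexp, ← mul_assoc, ← C_mul]
      congr 2
      linear_combination (- eval y (Polynomial.bernoulli i)) * hkey
    · rw [eval_comp]
      simp only [eval_add, eval_X, eval_C, zero_add]
      rw [eval_finset_sum, Finset.sum_range_succ]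
      simp only [eval_mul, eval_C, eval_pow, eval_X]
      rw [Nat.sub_self, pow_zero, Nat.choose_self]
      have : ∑ i ∈ range (n+1),
          ((n + 1).choose i : ℚ) * (Polynomial.bernoulli i).eval y * (0:ℚ) ^ (n + 1 - i) = 0 := by
        refine Finset.sum_eq_zero fun i hi => ?_
        have : n + 1 - i ≠ 0 := by have := Finset.mem_range.mp hi; omega
        rw [zero_pow this, mul_zero]
      rw [this]
      simp

lemma bern_eval_add (n : ℕ) (x y : ℚ) : (Polynomial.bernoulli n).eval (x + y)
    = ∑ i ∈ range (n + 1),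
        (n.choose i : ℚ) * (Polynomial.bernoulli i).eval y * x ^ (n - i) := by
  have := congrArg (Polynomial.eval x) (bern_comp_add y n)
  rw [eval_comp] at this
  simp only [eval_add, eval_X, eval_C] at this
  rw [eval_finset_sum] at this
  simpa [eval_mul, eval_C, eval_pow] using this

lemma bernoulli'_eq_neg_one_pow_mul (m : ℕ) :
    bernoulli' m = (-1 : ℚ)^m * _root_.bernoulli m := by
  rcases eq_or_ne m 1 with h | h
  · subst h; rw [bernoulli'_one, _root_.bernoulli_one]; norm_num
  · rw [← bernoulli_eq_bernoulli'_of_ne_one h]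
    rcases Nat.even_or_odd m with he | ho
    · rw [he.neg_one_pow, one_mul]
    · have h1 : 1 < m := by rcases ho with ⟨t, ht⟩; omega
      have hz : _root_.bernoulli m = 0 := by
        rw [bernoulli_eq_bernoulli'_of_ne_one h]; exact bernoulli'_eq_zero_of_odd ho h1
      rw [hz]; ring

lemma bern_comp_reflect : ∀ n : ℕ, (Polynomial.bernoulli n).comp (1 - X)
    = C ((-1 : ℚ)^n) * Polynomial.bernoulli n := by
  intro n
  induction n with
  | zero => simp [Polynomial.bernoulli_zero]
  | succ n ih =>
    apply poly_ext_of_deriv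
    · rw [derivative_comp, Polynomial.derivative_bernoulli_add_one]
      rw [derivative_sub, derivative_X, derivative_one, zero_sub]
      rw [mul_comp, add_comp, natCast_comp, one_comp, ih]
      rw [derivative_mul, derivative_C, zero_mul, zero_add,
        Polynomial.derivative_bernoulli_add_one]
      rw [show ((-1:ℚ)^(n+1)) = (-1)^n * (-1) by ring, C_mul, map_neg, C_1]
      ring
    · rw [eval_comp]
      simp only [eval_sub, eval_one, eval_X, sub_zero]
      rw [Polynomial.bernoulli_eval_one, eval_mul, eval_C, Polynomial.bernoulli_eval_zero]
      exact bernoulli'_eq_neg_one_pow_mul (n+1)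

lemma bern_eval_reflect (n : ℕ) (t : ℚ) :
    (Polynomial.bernoulli n).eval (1 - t) = (-1 : ℚ)^n * (Polynomial.bernoulli n).eval t := by
  have := congrArg (Polynomial.eval t) (bern_comp_reflect n)
  rw [eval_comp] at this
  simpa [eval_sub, eval_one, eval_X, eval_mul, eval_C] using this

lemma inner_sum (k l i : ℕ) :
    ∑ j ∈ range (l + 1),
        (-1 : ℚ)^j * ((l+1).choose j) * ((k:ℚ) + j + 1) * ((k+j).choose i)
      = (-1 : ℚ)^l * (((i:ℚ)+1) * ((k+l+2).choose (i+1))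
          - (if l ≤ i then ((i:ℚ)+1) * ((k+1).choose (i-l)) else 0)) := by
  have step1 : ∀ j, ((k:ℚ) + j + 1) * ((k+j).choose i)
      = ((i:ℚ)+1) * (((k+1) + j).choose (i+1)) := by
    intro j
    have h := Nat.add_one_mul_choose_eq (k+j) i
    have h2 := congrArg (fun t : ℕ => (t : ℚ)) h
    push_cast at h2
    have : (k+1) + j = k + j + 1 := by omega
    rw [this]
    push_cast
    linarith [h2]
  have lhs_eq : ∑ j ∈ range (l + 1),
        (-1 : ℚ)^j * ((l+1).choose j) * ((k:ℚ) + j + 1) * ((k+j).choose i)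
      = ((i:ℚ)+1) * ∑ j ∈ range (l + 1),
        (-1 : ℚ)^j * ((l+1).choose j) * ((((k+1) + j).choose (i+1) : ℕ) : ℚ) := by
    rw [Finset.mul_sum]
    refine Finset.sum_congr rfl fun j _ => ?_
    rw [mul_assoc ((-1:ℚ)^j * ((l+1).choose j)), step1 j]
    ring
  have hkb := key_binom (l+1) (k+1) (i+1)
  have hsplit : ∑ j ∈ range (l + 2),
        (-1 : ℚ)^j * ((l+1).choose j) * ((((k+1) + j).choose (i+1) : ℕ) : ℚ)
      = (∑ j ∈ range (l + 1),
          (-1 : ℚ)^j * ((l+1).choose j) * ((((k+1) + j).choose (i+1) : ℕ) : ℚ))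
        + (-1:ℚ)^(l+1) * ((k+l+2).choose (i+1)) := by
    rw [Finset.sum_range_succ, Nat.choose_self]
    have : (k+1) + (l+1) = k + l + 2 := by omega
    rw [this]
    push_cast
    ring
  have hcond : (if l + 1 ≤ i + 1 then (((k+1).choose (i+1-(l+1)) : ℕ) : ℚ) else 0)
      = (if l ≤ i then (((k+1).choose (i-l) : ℕ) : ℚ) else 0) := by
    have h1 : l + 1 ≤ i + 1 ↔ l ≤ i := by omega
    have h2 : i + 1 - (l + 1) = i - l := by omega
    rw [h2]
    exact if_congr h1 rfl rfl
  rw [lhs_eq]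
  have hsum : ∑ j ∈ range (l + 1),
        (-1 : ℚ)^j * ((l+1).choose j) * ((((k+1) + j).choose (i+1) : ℕ) : ℚ)
      = (-1:ℚ)^(l+1) * (if l ≤ i then (((k+1).choose (i-l) : ℕ) : ℚ) else 0)
        - (-1:ℚ)^(l+1) * ((k+l+2).choose (i+1)) := by
    have := hsplit.symm
    rw [hkb, hcond] at this
    linarith [this]
  rw [hsum]
  have hpow : (-1:ℚ)^(l+1) = -(-1:ℚ)^l := by ring
  rcases le_or_gt l i with hli | hli
  · rw [if_pos hli, if_pos hli, hpow]; ring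
  · rw [if_neg (by omega), if_neg (by omega), hpow]; ring

end SunAux

open SunAux

theorem sun_bernoulli_poly_deriv (k l : ℕ) (x y z : ℚ) (h : x + y + z = 1) :
    (-1 : ℚ) ^ k * ∑ j ∈ range (k + 1),
        ((k + 1).choose j : ℚ) * x ^ (k - j + 1) * (l + j + 1) *
          (Polynomial.bernoulli (l + j)).eval y
      + (-1 : ℚ) ^ l * ∑ j ∈ range (l + 1),
        ((l + 1).choose j : ℚ) * x ^ (l - j + 1) * (k + j + 1) *
          (Polynomial.bernoulli (k + j)).eval z
    = (-1 : ℚ) ^ k * (k + l + 2) *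
        ((Polynomial.bernoulli (k + l + 1)).eval (x + y) -
          (Polynomial.bernoulli (k + l + 1)).eval y) := by
  have hz : z = 1 - (x + y) := by linarith
  subst hz
  set T1 : ℚ := ∑ j ∈ range (k + 1),
      ((k + 1).choose j : ℚ) * x ^ (k - j + 1) * (l + j + 1) *
        (Polynomial.bernoulli (l + j)).eval y with hT1
  -- Step 1: rewrite each term of the second sum
  have step1 : ∀ j ∈ range (l + 1),
      ((l + 1).choose j : ℚ) * x ^ (l - j + 1) * (k + j + 1) *
          (Polynomial.bernoulli (k + j)).eval (1 - (x + y))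
        = ∑ i ∈ range (k + l + 2),
            (-1:ℚ)^k * ((-1:ℚ)^j * ((l+1).choose j) * ((k:ℚ)+j+1) * ((k+j).choose i))
              * ((Polynomial.bernoulli i).eval y * x ^ (k + l + 1 - i)) := by
    intro j hj
    have hjl : j ≤ l := by simpa [Nat.lt_succ_iff] using hj
    rw [bern_eval_reflect (k+j) (x+y), bern_eval_add (k+j) x y]
    have hext : ∑ i ∈ range (k + j + 1),
          ((k+j).choose i : ℚ) * (Polynomial.bernoulli i).eval y * x ^ (k + j - i)
        = ∑ i ∈ range (k + l + 2),
          ((k+j).choose i : ℚ) * (Polynomial.bernoulli i).eval y * x ^ (k + j - i) := by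
      refine Finset.sum_subset ?_ ?_
      · intro i hi
        refine Finset.mem_range.mpr ?_
        have := Finset.mem_range.mp hi
        omega
      · intro i _ hi
        have : k + j < i := by
          by_contra hcon
          exact hi (Finset.mem_range.mpr (by omega))
        rw [Nat.choose_eq_zero_of_lt this]
        simp
    rw [hext, Finset.mul_sum, Finset.mul_sum]
    refine Finset.sum_congr rfl fun i hi => ?_
    rcases le_or_gt i (k + j) with hik | hik
    · have hexp : (l - j + 1) + (k + j - i) = k + l + 1 - i := by omega
      have hxp : x ^ (l - j + 1) * x ^ (k + j - i) = x ^ (k + l + 1 - i) := by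
        rw [← pow_add, hexp]
      have hpw : (-1:ℚ)^(k+j) = (-1:ℚ)^k * (-1:ℚ)^j := by rw [pow_add]
      rw [hpw]
      rw [← hxp]
      push_cast
      ring
    · rw [Nat.choose_eq_zero_of_lt hik]
      push_cast
      ring
  rw [Finset.sum_congr rfl step1]
  rw [Finset.sum_comm]
  -- now inner sums over j
  have step2 : ∀ i ∈ range (k + l + 2),
      ∑ j ∈ range (l + 1),
          (-1:ℚ)^k * ((-1:ℚ)^j * ((l+1).choose j) * ((k:ℚ)+j+1) * ((k+j).choose i))
            * ((Polynomial.bernoulli i).eval y * x ^ (k + l + 1 - i))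
        = (-1:ℚ)^k * (-1:ℚ)^l *
            ((((i:ℚ)+1) * ((k+l+2).choose (i+1))
              - (if l ≤ i then ((i:ℚ)+1) * ((k+1).choose (i-l)) else 0))
            * ((Polynomial.bernoulli i).eval y * x ^ (k + l + 1 - i))) := by
    intro i _
    have : ∑ j ∈ range (l + 1),
          (-1:ℚ)^k * ((-1:ℚ)^j * ((l+1).choose j) * ((k:ℚ)+j+1) * ((k+j).choose i))
            * ((Polynomial.bernoulli i).eval y * x ^ (k + l + 1 - i))
        = (-1:ℚ)^k * ((Polynomial.bernoulli i).eval y * x ^ (k + l + 1 - i)) *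
            ∑ j ∈ range (l + 1),
              (-1:ℚ)^j * ((l+1).choose j) * ((k:ℚ)+j+1) * ((k+j).choose i) := by
      rw [Finset.mul_sum]
      refine Finset.sum_congr rfl fun j _ => ?_
      ring
    rw [this, inner_sum k l i]
    ring
  rw [Finset.sum_congr rfl step2]
  -- split the i-sum
  have split_sum : ∑ i ∈ range (k + l + 2),
      (-1:ℚ)^k * (-1:ℚ)^l *
          ((((i:ℚ)+1) * ((k+l+2).choose (i+1))
            - (if l ≤ i then ((i:ℚ)+1) * ((k+1).choose (i-l)) else 0))
          * ((Polynomial.bernoulli i).eval y * x ^ (k + l + 1 - i)))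
      = (-1:ℚ)^k * (-1:ℚ)^l *
          ((∑ i ∈ range (k + l + 2), ((i:ℚ)+1) * ((k+l+2).choose (i+1))
              * ((Polynomial.bernoulli i).eval y * x ^ (k + l + 1 - i)))
          - ∑ i ∈ range (k + l + 2),
              (if l ≤ i then ((i:ℚ)+1) * ((k+1).choose (i-l)) else 0)
                * ((Polynomial.bernoulli i).eval y * x ^ (k + l + 1 - i))) := by
    rw [← Finset.sum_sub_distrib, Finset.mul_sum]
    refine Finset.sum_congr rfl fun i _ => ?_
    ring
  rw [split_sum]
  -- evaluate sum A
  have sumA : ∑ i ∈ range (k + l + 2), ((i:ℚ)+1) * ((k+l+2).choose (i+1))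
        * ((Polynomial.bernoulli i).eval y * x ^ (k + l + 1 - i))
      = ((k:ℚ) + l + 2) * (Polynomial.bernoulli (k+l+1)).eval (x + y) := by
    rw [bern_eval_add (k+l+1) x y, Finset.mul_sum]
    refine Finset.sum_congr rfl fun i _ => ?_
    have h := Nat.add_one_mul_choose_eq (k+l+1) i
    try simp only [Nat.succ_eq_add_one] at h
    rw [(by omega : k + l + 1 + 1 = k + l + 2)] at h
    have h2 := congrArg (fun t : ℕ => (t : ℚ)) h
    push_cast at h2
    have hc : ((i:ℚ)+1) * ((k+l+2).choose (i+1)) = ((k:ℚ)+l+2) * ((k+l+1).choose i) := by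
      linarith [h2]
    rw [hc]
    ring
  -- evaluate sum B
  have sumB : ∑ i ∈ range (k + l + 2),
        (if l ≤ i then ((i:ℚ)+1) * ((k+1).choose (i-l)) else 0)
          * ((Polynomial.bernoulli i).eval y * x ^ (k + l + 1 - i))
      = T1 + ((k:ℚ) + l + 2) * (Polynomial.bernoulli (k+l+1)).eval y := by
    have hrange : k + l + 2 = l + (k + 2) := by omega
    rw [hrange, Finset.sum_range_add]
    have hfirst : ∑ i ∈ range l,
        (if l ≤ i then ((i:ℚ)+1) * ((k+1).choose (i-l)) else 0)
          * ((Polynomial.bernoulli i).eval y * x ^ (k + l + 1 - i)) = 0 := by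
      refine Finset.sum_eq_zero fun i hi => ?_
      rw [if_neg (by simpa using Nat.not_le.mpr (Finset.mem_range.mp hi))]
      ring
    rw [hfirst, zero_add]
    have hsecond : ∀ j ∈ range (k + 2),
        (if l ≤ l + j then (((l+j:ℕ):ℚ)+1) * ((k+1).choose ((l+j)-l)) else 0)
          * ((Polynomial.bernoulli (l+j)).eval y * x ^ (k + l + 1 - (l+j)))
        = (((l:ℚ)+j+1) * ((k+1).choose j))
            * ((Polynomial.bernoulli (l+j)).eval y * x ^ (k + 1 - j)) := by
      intro j hj
      have h1 : (l + j) - l = j := by omega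
      have h2 : k + l + 1 - (l + j) = k + 1 - j := by omega
      rw [if_pos (Nat.le_add_right l j), h1, h2]
      push_cast
      ring
    rw [Finset.sum_congr rfl hsecond]
    rw [Finset.sum_range_succ, hT1]
    congr 1
    · refine Finset.sum_congr rfl fun j hj => ?_
      have hjk : j ≤ k := by simpa [Nat.lt_succ_iff] using hj
      have : k + 1 - j = k - j + 1 := by omega
      rw [this]
      push_cast
      ring
    · rw [show l + (k+1) = k + l + 1 by omega, Nat.choose_self, Nat.sub_self, pow_zero]
      push_cast
      ring
  rw [sumA, sumB]
  have hll : (-1:ℚ)^l * (-1:ℚ)^l = 1 := by rw [← mul_pow]; norm_num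
  set BXY := Polynomial.eval (x + y) (Polynomial.bernoulli (k + l + 1)) with hBXY
  set BY := Polynomial.eval y (Polynomial.bernoulli (k + l + 1)) with hBY
  have key : (-1:ℚ)^l * ((-1:ℚ)^k * (-1:ℚ)^l *
      (((k:ℚ) + (l:ℚ) + 2) * BXY - (T1 + ((k:ℚ) + (l:ℚ) + 2) * BY)))
      = (-1:ℚ)^k * (((k:ℚ) + (l:ℚ) + 2) * BXY - (T1 + ((k:ℚ) + (l:ℚ) + 2) * BY)) := by
    have e : (-1:ℚ)^l * ((-1:ℚ)^k * (-1:ℚ)^l *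
        (((k:ℚ) + (l:ℚ) + 2) * BXY - (T1 + ((k:ℚ) + (l:ℚ) + 2) * BY)))
        = ((-1:ℚ)^l * (-1:ℚ)^l) * ((-1:ℚ)^k *
        (((k:ℚ) + (l:ℚ) + 2) * BXY - (T1 + ((k:ℚ) + (l:ℚ) + 2) * BY))) := by ring
    rw [e, hll, one_mul]
  rw [key]
  ring
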